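/- Let δ > 0, let m : ℕ → ℝ be a strictly increasing sequence of real numbers, and let a : ℕ → ℂ. Suppose that for every complex number z with 0 < |z| < δ, the family (a_i · z^{m_i})_{i∈ℕ} is absolutely summable, and set f(z) = ∑_{i} a_i · z^{m_i}. Then z^{−m_0} · f(z) tends to a_0 as z tends to 0 through nonzero values. -/

import Mathlib

theorem leading_coefficient_limit_14_5 (δ : ℝ) (hδ : 0 < δ)
    (m : ℕ → ℝ) (hm : StrictMono m) (a : ℕ → ℂ)
    (h : ∀ z : ℂ, 0 < ‖z‖ → ‖z‖ < δ →
      Summable (fun i : ℕ => ‖a i * z ^ ((m i : ℝ) : ℂ)‖)) :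
    Filter.Tendsto (fun z : ℂ => z ^ ((-(m 0) : ℝ) : ℂ) * ∑' i : ℕ, a i * z ^ ((m i : ℝ) : ℂ))
      (nhdsWithin 0 {(0 : ℂ)}ᶜ) (nhds (a 0)) := by
  obtain ⟨r, hr0, hrδ⟩ : ∃ r : ℝ, 0 < r ∧ r < δ := ⟨δ / 2, by positivity, by linarith⟩
  have hp : 0 < m 1 - m 0 := sub_pos.2 (hm Nat.zero_lt_one)
  have hCsum : Summable (fun i : ℕ => ‖a i‖ * r ^ (m i)) := by
    have h1 := h (r : ℂ) (by simpa [abs_of_pos hr0] using hr0)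
      (by simpa [abs_of_pos hr0] using hrδ)
    have he : (fun i : ℕ => ‖a i * (r : ℂ) ^ ((m i : ℝ) : ℂ)‖)
        = fun i : ℕ => ‖a i‖ * r ^ (m i) := by
      funext i
      simp [Complex.norm_cpow_real, abs_of_pos hr0]
    rwa [he] at h1
  have hCsum' : Summable (fun n : ℕ => ‖a (n + 1)‖ * r ^ (m (n + 1))) :=
    (summable_nat_add_iff (f := fun i : ℕ => ‖a i‖ * r ^ (m i)) 1).2 hCsum
  obtain ⟨K, hK⟩ : ∃ K : ℝ, K = (∑' n : ℕ, ‖a (n + 1)‖ * r ^ (m (n + 1))) * r ^ (-(m 1)) :=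
    ⟨_, rfl⟩
  rw [tendsto_iff_norm_sub_tendsto_zero]
  apply squeeze_zero' (g := fun z : ℂ => K * ‖z‖ ^ (m 1 - m 0))
  · exact Filter.Eventually.of_forall fun z => norm_nonneg _
  · have h1 : ∀ᶠ z : ℂ in nhdsWithin 0 {(0 : ℂ)}ᶜ, ‖z‖ < r := by
      apply Filter.Eventually.filter_mono nhdsWithin_le_nhds
      have hc : Filter.Tendsto (fun z : ℂ => ‖z‖) (nhds 0) (nhds 0) := by
        simpa using continuous_norm.tendsto (0:ℂ)
      exact hc.eventually_lt_const hr0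
    filter_upwards [h1, self_mem_nhdsWithin] with z hzr hz0
    simp only [Set.mem_compl_iff, Set.mem_singleton_iff] at hz0
    have ht0 : 0 < ‖z‖ := norm_pos_iff.mpr hz0
    have htδ : ‖z‖ < δ := lt_trans hzr hrδ
    have hmain : z ^ ((-(m 0) : ℝ) : ℂ) * ∑' i : ℕ, a i * z ^ ((m i : ℝ) : ℂ)
        = ∑' i : ℕ, a i * z ^ ((m i - m 0 : ℝ) : ℂ) := by
      rw [← tsum_mul_left]
      congr 1; funext i
      rw [Complex.ofReal_sub, sub_eq_add_neg, Complex.cpow_add _ _ hz0,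
        ← Complex.ofReal_neg]
      ring
    have hsumnorm : Summable (fun i : ℕ => ‖a i * z ^ ((m i - m 0 : ℝ) : ℂ)‖) := by
      have h2 := (h z ht0 htδ).mul_left ‖z ^ ((-(m 0) : ℝ) : ℂ)‖
      have he : (fun i : ℕ => ‖z ^ ((-(m 0) : ℝ) : ℂ)‖ * ‖a i * z ^ ((m i : ℝ) : ℂ)‖)
          = fun i : ℕ => ‖a i * z ^ ((m i - m 0 : ℝ) : ℂ)‖ := by
        funext i
        rw [← norm_mul, Complex.ofReal_sub, sub_eq_add_neg, Complex.cpow_add _ _ hz0,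
          ← Complex.ofReal_neg]
        ring_nf
      rwa [he] at h2
    have hsum : Summable (fun i : ℕ => a i * z ^ ((m i - m 0 : ℝ) : ℂ)) :=
      hsumnorm.of_norm
    have hzero : a 0 * z ^ ((m 0 - m 0 : ℝ) : ℂ) = a 0 := by simp
    have hsumnorm' : Summable (fun n : ℕ => ‖a (n + 1) * z ^ ((m (n + 1) - m 0 : ℝ) : ℂ)‖) :=
      (summable_nat_add_iff (f := fun i : ℕ => ‖a i * z ^ ((m i - m 0 : ℝ) : ℂ)‖) 1).2
        hsumnorm
    have hle : ∀ n : ℕ, ‖a (n + 1) * z ^ ((m (n + 1) - m 0 : ℝ) : ℂ)‖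
        ≤ (‖a (n + 1)‖ * r ^ (m (n + 1))) * (r ^ (-(m 1)) * ‖z‖ ^ (m 1 - m 0)) := by
      intro n
      have hexp : m (n + 1) - m 0 = (m 1 - m 0) + (m (n + 1) - m 1) := by ring
      have hmono : ‖z‖ ^ (m (n + 1) - m 1) ≤ r ^ (m (n + 1) - m 1) :=
        Real.rpow_le_rpow ht0.le hzr.le
          (sub_nonneg.2 (hm.monotone (Nat.succ_le_succ (Nat.zero_le n))))
      rw [norm_mul]
      rw [Complex.norm_cpow_real, hexp, Real.rpow_add ht0]
      calc ‖a (n + 1)‖ *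
              (‖z‖ ^ (m 1 - m 0) * ‖z‖ ^ (m (n + 1) - m 1))
          ≤ ‖a (n + 1)‖ *
              (‖z‖ ^ (m 1 - m 0) * r ^ (m (n + 1) - m 1)) := by
            gcongr
        _ = (‖a (n + 1)‖ * r ^ (m (n + 1))) *
              (r ^ (-(m 1)) * ‖z‖ ^ (m 1 - m 0)) := by
            rw [sub_eq_add_neg (m (n + 1)) (m 1), Real.rpow_add hr0]
            ring
    rw [hmain, hsum.tsum_eq_zero_add, hzero, add_sub_cancel_left]
    calc ‖∑' n : ℕ, a (n + 1) * z ^ ((m (n + 1) - m 0 : ℝ) : ℂ)‖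
        ≤ ∑' n : ℕ, ‖a (n + 1) * z ^ ((m (n + 1) - m 0 : ℝ) : ℂ)‖ :=
          norm_tsum_le_tsum_norm hsumnorm'
      _ ≤ ∑' n : ℕ, (‖a (n + 1)‖ * r ^ (m (n + 1))) *
            (r ^ (-(m 1)) * ‖z‖ ^ (m 1 - m 0)) :=
          Summable.tsum_le_tsum hle hsumnorm' (hCsum'.mul_right _)
      _ = K * ‖z‖ ^ (m 1 - m 0) := by
          rw [tsum_mul_right, hK]; ring
  · have habs : Filter.Tendsto (fun z : ℂ => ‖z‖)
        (nhdsWithin 0 {(0 : ℂ)}ᶜ) (nhds 0) := by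
      apply Filter.Tendsto.mono_left _ nhdsWithin_le_nhds
      simpa using continuous_norm.tendsto (0:ℂ)
    have hrpow : Filter.Tendsto (fun x : ℝ => x ^ (m 1 - m 0)) (nhds 0) (nhds 0) := by
      have hc := (Real.continuousAt_rpow_const 0 (m 1 - m 0) (Or.inr hp.le)).tendsto
      simpa [Real.zero_rpow hp.ne'] using hc
    have hfin := (hrpow.comp habs).const_mul K
    simpa using hfin
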